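/- Let 𝒞 be an uncrossable family of cycles in a graph, C₁, C₂ ∈ 𝒞, v and w two vertices, P₁ a v-w-path contained in C₁, and P₂ a v-w-path contained in C₂. Then at least one of the two edge sets P₁ + P₂ and P₁ + (C₂ − P₂) contains a cycle of 𝒞. -/

import Mathlib

open Finset

variable {V : Type*} [DecidableEq V]

/-- The edge set of a (simple) cycle in `G`. -/
def IsCycleEdges (G : SimpleGraph V) (s : Finset (Sym2 V)) : Prop :=
  ∃ (u : V) (c : G.Walk u u), c.IsCycle ∧ c.edges.toFinset = s

/-- The edge set of a (simple) path from `v` to `w` in `G`. -/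
def IsPathEdges (G : SimpleGraph V) (v w : V) (s : Finset (Sym2 V)) : Prop :=
  ∃ p : G.Walk v w, p.IsPath ∧ p.edges.toFinset = s

/-- The set of vertices covered by an edge set. -/
def edgeVerts (s : Finset (Sym2 V)) : Set V := {x | ∃ e ∈ s, x ∈ e}

/-- A family of cycles (given by their edge sets) is uncrossable:
for `C₁, C₂` in the family and a `v`-`w`-path `P₂` contained in `C₂` sharing only its
endpoints `v, w` with `C₁`, there is a `v`-`w`-path `P₁` contained in `C₁` such that
`P₁ + P₂` belongs to the family and `(C₁ - P₁) + (C₂ - P₂)` contains a member of the family. -/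
def Uncrossable (G : SimpleGraph V) (𝒞 : Set (Finset (Sym2 V))) : Prop :=
  ∀ C₁ ∈ 𝒞, ∀ C₂ ∈ 𝒞, ∀ v w : V, v ≠ w → ∀ P₂ : Finset (Sym2 V),
    IsPathEdges G v w P₂ → P₂ ⊆ C₂ →
    edgeVerts P₂ ∩ edgeVerts C₁ ⊆ {v, w} →
    v ∈ edgeVerts C₁ → w ∈ edgeVerts C₁ →
    ∃ P₁ : Finset (Sym2 V), IsPathEdges G v w P₁ ∧ P₁ ⊆ C₁ ∧
      (P₁ ∪ P₂) ∈ 𝒞 ∧ ∃ C ∈ 𝒞, C ⊆ (C₁ \ P₁) ∪ (C₂ \ P₂)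

/-- An edge set is good (w.r.t. a family `𝒞` of cycles) if it contains the edge set of a
cycle in `𝒞`. -/
def Good (𝒞 : Set (Finset (Sym2 V))) (s : Finset (Sym2 V)) : Prop :=
  ∃ C ∈ 𝒞, C ⊆ s

section Helpers

open SimpleGraph Walk

set_option linter.unusedSectionVars false
set_option linter.unusedVariables false
set_option linter.unreachableTactic false
set_option linter.unusedTactic false
set_option maxHeartbeats 1000000

variable {G : SimpleGraph V}

lemma takeUntil_start {u x : V} (p : G.Walk u x) (h : u ∈ p.support) :
    p.takeUntil u h = Walk.nil := by
  cases p <;> simp [Walk.takeUntil]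

lemma takeUntil_cons' {u y x b : V} (h' : G.Adj u y) (p : G.Walk y x)
    (hb2 : b ∈ p.support) (hne : u ≠ b) (hb : b ∈ (Walk.cons h' p).support) :
    (Walk.cons h' p).takeUntil b hb = Walk.cons h' (p.takeUntil b hb2) := by
  simp [Walk.takeUntil, hne]

lemma dropUntil_cons' {u y x b : V} (h' : G.Adj u y) (p : G.Walk y x)
    (hb2 : b ∈ p.support) (hne : u ≠ b) (hb : b ∈ (Walk.cons h' p).support) :
    (Walk.cons h' p).dropUntil b hb = p.dropUntil b hb2 := by
  simp [Walk.dropUntil, hne]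

lemma takeUntil_congr {u x b : V} {p q : G.Walk u x} (hpq : p = q) (hb : b ∈ p.support) :
    (p.takeUntil b hb).edges = (q.takeUntil b (hpq ▸ hb)).edges := by subst hpq; rfl

lemma takeUntil_end {u b : V} (p : G.Walk u b) (hp : p.IsPath) (h : b ∈ p.support) :
    p.takeUntil b h = p := by
  induction p with
  | nil => exact takeUntil_start _ _
  | @cons u' y' b' h' p ih =>
    have hbne : u' ≠ b' := by
      rintro rfl
      exact ((Walk.cons_isPath_iff _ _).mp hp).2 p.end_mem_support
    rw [takeUntil_cons' h' p p.end_mem_support hbne]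
    rw [ih ((Walk.cons_isPath_iff _ _).mp hp).1 _]

lemma takeUntil_append_edges {u x y b : V} (p : G.Walk u x) (q : G.Walk x y)
    (hb : b ∈ p.support) (h : b ∈ (p.append q).support) :
    ((p.append q).takeUntil b h).edges = (p.takeUntil b hb).edges := by
  induction p with
  | nil =>
    rw [Walk.mem_support_nil_iff] at hb; subst hb
    rw [takeUntil_start, takeUntil_start]
  | @cons u' z x' h' p ih =>
    by_cases hub : u' = b
    · subst hub
      rw [takeUntil_start, takeUntil_start]
    · have hb2 : b ∈ p.support := by
        have h1 := hb; rw [Walk.support_cons] at h1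
        rcases List.mem_cons.mp h1 with h1 | h1
        · exact absurd h1.symm hub
        · exact h1
      have hbap : b ∈ (p.append q).support := by
        rw [Walk.mem_support_append_iff]; left; exact hb2
      show ((Walk.cons h' (p.append q)).takeUntil b h).edges
          = ((Walk.cons h' p).takeUntil b hb).edges
      erw [takeUntil_cons' h' (p.append q) hbap hub, takeUntil_cons' h' p hb2 hub]
      simp [ih q hb2 hbap]

lemma mem_support_of_mem_edges'' {u x : V} (p : G.Walk u x) {f : Sym2 V} {a : V}
    (hf : f ∈ p.edges) (ha : a ∈ f) : a ∈ p.support := by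
  obtain ⟨b, rfl⟩ := Sym2.mem_iff_exists.mp ha
  exact p.fst_mem_support_of_mem_edges hf

lemma path_in_path {u b x : V} (q : G.Walk u b) (r : G.Walk u x)
    (hq : q.IsPath) (hr : r.IsPath) (hsub : ∀ f ∈ q.edges, f ∈ r.edges) :
    ∃ hb : b ∈ r.support, q.edges = (r.takeUntil b hb).edges := by
  induction q generalizing x with
  | nil => exact ⟨r.start_mem_support, by rw [takeUntil_start]⟩
  | @cons u' q₁ b' h' q' ih =>
    cases r with
    | nil =>
      exact absurd (hsub s(u', q₁) (by simp)) (by simp)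
    | @cons _ r₁ _ h₀ r' =>
      have hfe : s(u', q₁) ∈ (Walk.cons h₀ r').edges := hsub _ (by simp)
      have hq₁ : q₁ = r₁ := by
        rcases List.mem_cons.mp hfe with h1 | h1
        · exact Sym2.congr_right.mp h1
        · exact absurd (mem_support_of_mem_edges'' r' h1 (by simp))
            ((Walk.cons_isPath_iff _ _).mp hr).2
      subst hq₁
      have hsub' : ∀ f ∈ q'.edges, f ∈ r'.edges := by
        intro f hf
        rcases List.mem_cons.mp (hsub f (by simp [hf])) with h1 | h1
        · exact absurd (mem_support_of_mem_edges'' q' (h1 ▸ hf) (by simp))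
            ((Walk.cons_isPath_iff _ _).mp hq).2
        · exact h1
      obtain ⟨hb, hedges⟩ := ih r' ((Walk.cons_isPath_iff _ _).mp hq).1
        ((Walk.cons_isPath_iff _ _).mp hr).1 hsub'
      have hbu : u' ≠ b' := by
        rintro rfl
        exact ((Walk.cons_isPath_iff _ _).mp hq).2 q'.end_mem_support
      refine ⟨by simp [hb], ?_⟩
      erw [takeUntil_cons' h₀ r' hb hbu]
      simp [hedges]

lemma isCycle_reverse {a : V} {d : G.Walk a a} (hd : d.IsCycle) : d.reverse.IsCycle := by
  rw [Walk.isCycle_def]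
  refine ⟨hd.isTrail.reverse _, ?_, ?_⟩
  · intro hn
    apply hd.ne_nil
    have := congrArg Walk.reverse hn
    simpa using this
  · cases d with
    | nil => simp
    | @cons _ y _ h q =>
      have hnd : q.support.Nodup := by
        have := hd.support_nodup; simpa using this
      have h1 : (Walk.cons h q).reverse.support = (a :: q.reverse.support.tail) ++ [a] := by
        rw [Walk.support_reverse, Walk.support_cons]
        have : q.support.reverse = q.reverse.support := (Walk.support_reverse q).symm
        rw [List.reverse_cons, this, Walk.support_eq_cons q.reverse]
        simp
      rw [h1]
      have h2 : ((a :: q.reverse.support.tail) ++ [a]).tail = q.reverse.support.tail ++ [a] := by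
        simp
      rw [h2]
      have h3 : (q.reverse.support.tail ++ [a]).Nodup ↔ (a :: q.reverse.support.tail).Nodup := by
        rw [← List.singleton_append]
        exact List.perm_append_comm.nodup_iff
      rw [h3, ← Walk.support_eq_cons q.reverse, Walk.support_reverse, List.nodup_reverse]
      exact hnd

lemma one_sided {a a₁ b : V} (e : G.Adj a a₁) (d' : G.Walk a₁ a) (hd' : d'.IsPath)
    (q : G.Walk a b) (hq : q.IsPath) (hba : b ≠ a)
    (hsub : ∀ f ∈ q.edges, f ∈ (Walk.cons e d').edges)
    (hmem : s(a, a₁) ∈ q.edges) :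
    ∃ hb : b ∈ d'.support, q.edges = s(a, a₁) :: (d'.takeUntil b hb).edges := by
  cases q with
  | nil => simp at hmem
  | @cons _ q₁ _ h' q' =>
    have hq₁ : q₁ = a₁ := by
      rcases List.mem_cons.mp hmem with h1 | h1
      · exact Sym2.congr_right.mp h1.symm
      · exact absurd (mem_support_of_mem_edges'' q' h1 (by simp))
          ((Walk.cons_isPath_iff _ _).mp hq).2
    subst hq₁
    have hsub' : ∀ f ∈ q'.edges, f ∈ d'.edges := by
      intro f hf
      rcases List.mem_cons.mp (hsub f (by simp [hf])) with h1 | h1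
      · exact absurd (mem_support_of_mem_edges'' q' (h1 ▸ hf) (by simp))
          ((Walk.cons_isPath_iff _ _).mp hq).2
      · exact h1
    obtain ⟨hb, hedges⟩ := path_in_path q' d' ((Walk.cons_isPath_iff _ _).mp hq).1 hd' hsub'
    exact ⟨hb, by simp [hedges]⟩

lemma dropUntil_congr {u x b : V} {p q : G.Walk u x} (hpq : p = q) (hb : b ∈ p.support) :
    (p.dropUntil b hb).edges = (q.dropUntil b (hpq ▸ hb)).edges := by subst hpq; rfl

lemma cycle_split_edges {a b : V} (d : G.Walk a a) (hd : d.IsCycle) (hb : b ∈ d.support) :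
    d.edges = (d.takeUntil b hb).edges ++ (d.dropUntil b hb).edges := by
  conv_lhs => rw [← d.take_spec hb]
  rw [Walk.edges_append]

lemma cycle_drop_sdiff {a b : V} (d : G.Walk a a) (hd : d.IsCycle) (hb : b ∈ d.support) :
    (d.dropUntil b hb).edges.toFinset
      = d.edges.toFinset \ (d.takeUntil b hb).edges.toFinset := by
  have hsplit := cycle_split_edges d hd hb
  have hnd : d.edges.Nodup := hd.isTrail.edges_nodup
  rw [hsplit] at hnd
  have hdisj := List.disjoint_of_nodup_append hnd
  ext f
  simp only [Finset.mem_sdiff, List.mem_toFinset, hsplit, List.mem_append]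
  constructor
  · intro hf
    exact ⟨Or.inr hf, fun hf' => hdisj hf' hf⟩
  · rintro ⟨h1 | h1, h2⟩
    · exact absurd h1 h2
    · exact h1

lemma cycle_take_isPath {a b : V} (d : G.Walk a a) (hd : d.IsCycle) (hb : b ∈ d.support)
    (hba : b ≠ a) : (d.takeUntil b hb).IsPath := by
  cases d with
  | nil => exact absurd rfl hd.ne_nil
  | @cons _ a₁ _ e d₀ =>
    have hd₀ : d₀.IsPath := ((Walk.cons_isCycle_iff _ _).mp hd).1
    have hb₀ : b ∈ d₀.support := by
      have h1 := hb; rw [Walk.support_cons] at h1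
      rcases List.mem_cons.mp h1 with h1 | h1
      · exact absurd h1 hba
      · exact h1
    rw [takeUntil_cons' e d₀ hb₀ (by first | exact Ne.symm hba | exact hba)]
    rw [Walk.cons_isPath_iff]
    refine ⟨hd₀.takeUntil hb₀, ?_⟩
    intro hmem
    -- a is the end of d₀; it cannot lie in the takeUntil part
    have hspec := d₀.take_spec hb₀
    have hsupp : d₀.support = (d₀.takeUntil b hb₀).support
        ++ (d₀.dropUntil b hb₀).support.tail := by
      conv_lhs => rw [← hspec]
      rw [Walk.support_append]
    have hnd := hd₀.support_nodup
    rw [hsupp] at hnd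
    have hdisj := List.disjoint_of_nodup_append hnd
    have ha2 : a ∈ (d₀.dropUntil b hb₀).support.tail := by
      have hend : a ∈ (d₀.dropUntil b hb₀).support := Walk.end_mem_support _
      rw [Walk.support_eq_cons] at hend
      rcases List.mem_cons.mp hend with h1 | h1
      · exact absurd h1.symm hba
      · exact h1
    exact hdisj hmem ha2

lemma cycle_drop_isPath {a b : V} (d : G.Walk a a) (hd : d.IsCycle) (hb : b ∈ d.support)
    (hba : b ≠ a) : (d.dropUntil b hb).IsPath := by
  cases d with
  | nil => exact absurd rfl hd.ne_nil
  | @cons _ a₁ _ e d₀ =>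
    have hd₀ : d₀.IsPath := ((Walk.cons_isCycle_iff _ _).mp hd).1
    have hb₀ : b ∈ d₀.support := by
      have h1 := hb; rw [Walk.support_cons] at h1
      rcases List.mem_cons.mp h1 with h1 | h1
      · exact absurd h1 (by first | exact Ne.symm hba | exact hba)
      · exact h1
    rw [dropUntil_cons' e d₀ hb₀ (by first | exact Ne.symm hba | exact hba)]
    exact hd₀.dropUntil hb₀

lemma cycle_path_dichotomy {a b : V} (d : G.Walk a a) (hd : d.IsCycle) (hb : b ∈ d.support)
    (hba : b ≠ a) (q : G.Walk a b) (hq : q.IsPath) (hsub : ∀ f ∈ q.edges, f ∈ d.edges) :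
    q.edges.toFinset = (d.takeUntil b hb).edges.toFinset ∨
    q.edges.toFinset = (d.dropUntil b hb).edges.toFinset := by
  cases q with
  | nil => exact absurd rfl hba
  | @cons _ q₁ _ h' q' =>
    have hf₀ : s(a, q₁) ∈ d.edges := hsub _ (by simp)
    cases d with
    | nil => exact absurd rfl hd.ne_nil
    | @cons _ a₁ _ e d₀ =>
      have hd₀ : d₀.IsPath := ((Walk.cons_isCycle_iff _ _).mp hd).1
      have hb₀ : b ∈ d₀.support := by
        have h1 := hb; rw [Walk.support_cons] at h1
        rcases List.mem_cons.mp h1 with h1 | h1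
        · exact absurd h1 hba
        · exact h1
      rw [Walk.edges_cons] at hf₀
      rcases List.mem_cons.mp hf₀ with hcase | hcase
      · -- q follows the first edge of d
        left
        have hmem : s(a, a₁) ∈ (Walk.cons h' q').edges := by
          rw [← hcase]; simp
        obtain ⟨hb', hedges⟩ := one_sided e d₀ hd₀ (Walk.cons h' q') hq hba hsub hmem
        rw [takeUntil_cons' e d₀ hb₀ (Ne.symm hba)]
        rw [hedges]
        simp
      · -- q starts into the other direction
        right
        -- replace d₀ by r.reverse
        obtain ⟨r, rfl⟩ : ∃ r : G.Walk a a₁, d₀ = r.reverse := ⟨d₀.reverse, by simp⟩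
        have hrpath : r.IsPath := by
          rw [← Walk.isPath_reverse_iff]; exact hd₀
        have hfr : s(a, q₁) ∈ r.edges := by
          have := hcase
          rw [Walk.edges_reverse, List.mem_reverse] at this; exact this
        cases r with
        | nil => exact absurd e (G.irrefl)
        | @cons _ a₂ _ e₂ r₂ =>
          rw [Walk.edges_cons] at hfr
          have hq₁ : q₁ = a₂ := by
            rcases List.mem_cons.mp hfr with h1 | h1
            · exact Sym2.congr_right.mp h1
            · exact absurd (mem_support_of_mem_edges'' r₂ h1 (by simp))
                ((Walk.cons_isPath_iff _ _).mp hrpath).2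
          subst hq₁
          set D : G.Walk a a := Walk.cons e (Walk.cons e₂ r₂).reverse with hD
          set d₁ : G.Walk q₁ a := r₂.append (Walk.cons e.symm Walk.nil) with hd₁
          have hdrev : D.reverse = Walk.cons e₂ d₁ := by
            rw [hD, hd₁]
            simp [Walk.reverse_cons]
          have hDrevCyc : D.reverse.IsCycle := isCycle_reverse hd
          have hd₁path : d₁.IsPath := by
            rw [hdrev] at hDrevCyc
            exact ((Walk.cons_isCycle_iff _ _).mp hDrevCyc).1
          have hsub' : ∀ f ∈ (Walk.cons h' q').edges, f ∈ (Walk.cons e₂ d₁).edges := by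
            intro f hf
            have h1 : f ∈ D.reverse.edges := by
              rw [Walk.edges_reverse, List.mem_reverse]; exact hsub f hf
            rw [hdrev] at h1; exact h1
          have hmem : s(a, q₁) ∈ (Walk.cons h' q').edges := by simp
          obtain ⟨hb₁, hedges⟩ := one_sided e₂ d₁ hd₁path (Walk.cons h' q') hq hba hsub' hmem
          -- q.edges = (D.reverse.takeUntil b).edges
          have hbrev : b ∈ D.reverse.support := by
            rw [Walk.support_reverse, List.mem_reverse]; exact hb
          have heq1 : (D.reverse.takeUntil b hbrev).edges
              = s(a, q₁) :: (d₁.takeUntil b hb₁).edges := by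
            rw [takeUntil_congr hdrev hbrev]
            rw [takeUntil_cons' e₂ d₁ hb₁ (Ne.symm hba)]
            simp
          -- now identify (D.reverse.takeUntil b) with (D.dropUntil b).reverse
          have hspec := D.take_spec hb
          have hrev2 : D.reverse = (D.dropUntil b hb).reverse.append (D.takeUntil b hb).reverse := by
            conv_lhs => rw [← hspec]
            rw [Walk.reverse_append]
          have hbdrop : b ∈ (D.dropUntil b hb).reverse.support := Walk.end_mem_support _
          have heq2 : (D.reverse.takeUntil b hbrev).edges
              = ((D.dropUntil b hb).reverse.takeUntil b hbdrop).edges := by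
            rw [takeUntil_congr hrev2 hbrev]
            exact takeUntil_append_edges _ _ hbdrop _
          have hdroppath : (D.dropUntil b hb).reverse.IsPath :=
            (cycle_drop_isPath D hd hb hba).reverse
          have heq3 : ((D.dropUntil b hb).reverse.takeUntil b hbdrop).edges
              = (D.dropUntil b hb).reverse.edges :=
            congrArg Walk.edges (takeUntil_end _ hdroppath hbdrop)
          have : (Walk.cons h' q').edges.toFinset = (D.reverse.takeUntil b hbrev).edges.toFinset := by
            rw [heq1, hedges]
          rw [this, heq2, heq3, Walk.edges_reverse]
          simp only [List.toFinset_reverse]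
          rfl

lemma edgeVerts_mono {s t : Finset (Sym2 V)} (h : s ⊆ t) : edgeVerts s ⊆ edgeVerts t :=
  fun _ ⟨e, he, hx⟩ => ⟨e, h he, hx⟩

lemma path_same_ends_nil {v : V} (p : G.Walk v v) (hp : p.IsPath) : p = Walk.nil := by
  cases p with
  | nil => rfl
  | cons h q => exact absurd q.end_mem_support ((Walk.cons_isPath_iff _ _).mp hp).2

lemma isPathEdges_symm {v w : V} {s : Finset (Sym2 V)} (h : IsPathEdges G v w s) :
    IsPathEdges G w v s := by
  obtain ⟨p, hp, rfl⟩ := h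
  exact ⟨p.reverse, hp.reverse, by rw [Walk.edges_reverse]; simp⟩

lemma start_mem_edgeVerts {v w : V} {s : Finset (Sym2 V)} (h : IsPathEdges G v w s)
    (hvw : v ≠ w) : v ∈ edgeVerts s := by
  obtain ⟨p, hp, rfl⟩ := h
  cases p with
  | nil => exact absurd rfl hvw
  | @cons _ y _ h' q => exact ⟨s(v, y), by simp, by simp⟩

lemma end_mem_edgeVerts {v w : V} {s : Finset (Sym2 V)} (h : IsPathEdges G v w s)
    (hvw : v ≠ w) : w ∈ edgeVerts s :=
  start_mem_edgeVerts (isPathEdges_symm h) (Ne.symm hvw)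

lemma mem_edgeVerts_union {s t : Finset (Sym2 V)} {x : V} :
    x ∈ edgeVerts (s ∪ t) ↔ x ∈ edgeVerts s ∨ x ∈ edgeVerts t := by
  constructor
  · rintro ⟨e, he, hx⟩
    rcases Finset.mem_union.mp he with h1 | h1
    · exact Or.inl ⟨e, h1, hx⟩
    · exact Or.inr ⟨e, h1, hx⟩
  · rintro (⟨e, he, hx⟩ | ⟨e, he, hx⟩)
    · exact ⟨e, Finset.mem_union_left _ he, hx⟩
    · exact ⟨e, Finset.mem_union_right _ he, hx⟩

/-- two-arc decomposition of a cycle with respect to two of its vertices -/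
lemma cycle_two_arcs {C : Finset (Sym2 V)} (hC : IsCycleEdges G C) {a b : V} (hab : a ≠ b)
    (haC : a ∈ edgeVerts C) (hbC : b ∈ edgeVerts C) :
    ∃ A B : Finset (Sym2 V), C = A ∪ B ∧ Disjoint A B ∧
      IsPathEdges G a b A ∧ IsPathEdges G a b B ∧
      (∀ Q, IsPathEdges G a b Q → Q ⊆ C → Q = A ∨ Q = B) := by
  obtain ⟨u, c, hc, rfl⟩ := hC
  obtain ⟨ea, hea, hxa⟩ := haC
  have ha : a ∈ c.support :=
    mem_support_of_mem_edges'' c (List.mem_toFinset.mp hea) hxa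
  set d := c.rotate a ha with hd'
  have hd : d.IsCycle := hc.rotate ha
  have hdE : d.edges.toFinset = c.edges.toFinset := by
    ext e
    simp only [List.mem_toFinset]
    exact (c.rotate_edges a ha).mem_iff
  obtain ⟨eb, heb, hxb⟩ := hbC
  have hb : b ∈ d.support := by
    refine mem_support_of_mem_edges'' d ?_ hxb
    rw [← List.mem_toFinset, hdE]
    exact heb
  have hba : b ≠ a := Ne.symm hab
  refine ⟨(d.takeUntil b hb).edges.toFinset, (d.dropUntil b hb).edges.toFinset, ?_, ?_, ?_, ?_, ?_⟩
  · rw [← hdE, cycle_split_edges d hd hb]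
    simp
  · rw [cycle_drop_sdiff d hd hb]
    exact Finset.disjoint_sdiff
  · exact ⟨d.takeUntil b hb, cycle_take_isPath d hd hb hba, rfl⟩
  · refine ⟨(d.dropUntil b hb).reverse, (cycle_drop_isPath d hd hb hba).reverse, ?_⟩
    rw [Walk.edges_reverse]; simp
  · rintro Q ⟨q, hq, rfl⟩ hQC
    refine cycle_path_dichotomy d hd hb hba q hq ?_
    intro f hf
    rw [← List.mem_toFinset, hdE]
    exact hQC (List.mem_toFinset.mpr hf)

lemma cycle_compl_path {C Q : Finset (Sym2 V)} (hC : IsCycleEdges G C) {a b : V} (hab : a ≠ b)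
    (hQ : IsPathEdges G a b Q) (hQC : Q ⊆ C) : IsPathEdges G a b (C \ Q) := by
  obtain ⟨A, B, hun, hdisj, hA, hB, huniq⟩ := cycle_two_arcs hC hab
    (edgeVerts_mono hQC (start_mem_edgeVerts hQ hab))
    (edgeVerts_mono hQC (end_mem_edgeVerts hQ hab))
  rcases huniq Q hQ hQC with rfl | rfl
  · rwa [hun, Finset.union_sdiff_cancel_left hdisj]
  · rwa [hun, Finset.union_sdiff_cancel_right hdisj]

lemma cycle_path_cases {C Q Q' : Finset (Sym2 V)} (hC : IsCycleEdges G C) {a b : V} (hab : a ≠ b)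
    (hQ : IsPathEdges G a b Q) (hQC : Q ⊆ C)
    (hQ' : IsPathEdges G a b Q') (hQ'C : Q' ⊆ C) : Q' = Q ∨ Q' = C \ Q := by
  obtain ⟨A, B, hun, hdisj, hA, hB, huniq⟩ := cycle_two_arcs hC hab
    (edgeVerts_mono hQC (start_mem_edgeVerts hQ hab))
    (edgeVerts_mono hQC (end_mem_edgeVerts hQ hab))
  rcases huniq Q hQ hQC with rfl | rfl <;> rcases huniq Q' hQ' hQ'C with rfl | rfl
  · exact Or.inl rfl
  · exact Or.inr (by rw [hun, Finset.union_sdiff_cancel_left hdisj])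
  · exact Or.inr (by rw [hun, Finset.union_sdiff_cancel_right hdisj])
  · exact Or.inl rfl

lemma first_hit {v w : V} (p : G.Walk v w) (hp : p.IsPath) (P : V → Prop) [DecidablePred P]
    (hw : P w) (hvw : v ≠ w) :
    ∃ (x : V) (A : G.Walk v x) (B : G.Walk x w), x ≠ v ∧ P x ∧ A.IsPath ∧ B.IsPath ∧
      A.edges ++ B.edges = p.edges ∧ (∀ y ∈ A.support, y ≠ v → y ≠ x → ¬ P y) ∧
      (∀ y ∈ A.support, y ∈ p.support) := by
  induction p with
  | nil => exact absurd rfl hvw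
  | @cons v' y' w' h' p' ih =>
    have hp' : p'.IsPath := ((Walk.cons_isPath_iff _ _).mp hp).1
    have hv'p : v' ∉ p'.support := ((Walk.cons_isPath_iff _ _).mp hp).2
    by_cases hPy : P y'
    · refine ⟨y', Walk.cons h' Walk.nil, p', h'.ne', hPy, ?_, hp', by simp, ?_, ?_⟩
      · simp [Walk.cons_isPath_iff, h'.ne]
      · intro y hy h1 h2
        simp only [Walk.support_cons, Walk.support_nil, List.mem_cons,
          List.mem_singleton, or_false, List.not_mem_nil] at hy
        rcases hy with hy | hy
        · exact absurd hy h1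
        · exact absurd hy h2
      · intro y hy
        simp only [Walk.support_cons, Walk.support_nil, List.mem_cons,
          List.mem_singleton, or_false, List.not_mem_nil] at hy
        simp only [Walk.support_cons, List.mem_cons]
        rcases hy with hy | hy
        · exact Or.inl hy
        · exact Or.inr (hy ▸ p'.start_mem_support)
    · have hy'w : y' ≠ w' := by rintro rfl; exact hPy hw
      obtain ⟨x, A', B, hxv, hPx, hA', hB, hedges, hint, hsupp⟩ := ih hp' hw hy'w
      have hv'A : v' ∉ A'.support := fun hmem => hv'p (hsupp v' hmem)
      have hxv' : x ≠ v' := fun hh => hv'A (hh ▸ A'.end_mem_support)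
      refine ⟨x, Walk.cons h' A', B, hxv', hPx, ?_, hB, ?_, ?_, ?_⟩
      · exact (Walk.cons_isPath_iff _ _).mpr ⟨hA', hv'A⟩
      · simp [← hedges]
      · intro y hy h1 h2
        rw [Walk.support_cons] at hy
        rcases List.mem_cons.mp hy with hy | hy
        · exact absurd hy h1
        · by_cases hy3 : y = y'
          · subst hy3; exact hPy
          · exact hint y hy hy3 h2
      · intro y hy
        rw [Walk.support_cons] at hy
        rw [Walk.support_cons]
        rcases List.mem_cons.mp hy with hy | hy
        · simp [hy]
        · exact List.mem_cons.mpr (Or.inr (hsupp y hy))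


lemma good_mono {𝒞 : Set (Finset (Sym2 V))} {s t : Finset (Sym2 V)} (h : Good 𝒞 s)
    (hst : s ⊆ t) : Good 𝒞 t := by
  obtain ⟨C, hC, hCs⟩ := h
  exact ⟨C, hC, hCs.trans hst⟩

lemma good_right_of_eq {𝒞 : Set (Finset (Sym2 V))} {C₂ P₁ P₂ : Finset (Sym2 V)} {v w : V}
    (hC₂ : C₂ ∈ 𝒞) (hvw : v = w) (hP₂ : IsPathEdges G v w P₂) :
    Good 𝒞 (P₁ ∪ (C₂ \ P₂)) := by
  subst hvw
  obtain ⟨p₂, hp₂, rfl⟩ := hP₂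
  rw [path_same_ends_nil p₂ hp₂]
  exact ⟨C₂, hC₂, by simp⟩

theorem aux_good (G : SimpleGraph V) (𝒞 : Set (Finset (Sym2 V)))
    (hcyc : ∀ s ∈ 𝒞, IsCycleEdges G s) (h : Uncrossable G 𝒞) :
    ∀ n : ℕ, ∀ C₁ C₂ : Finset (Sym2 V), C₁ ∈ 𝒞 → C₂ ∈ 𝒞 →
    ∀ (v w : V) (P₁ P₂ : Finset (Sym2 V)),
      IsPathEdges G v w P₁ → P₁ ⊆ C₁ → IsPathEdges G v w P₂ → P₂ ⊆ C₂ →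
      P₁.card ≤ n →
      Good 𝒞 (P₁ ∪ P₂) ∨ Good 𝒞 (P₁ ∪ (C₂ \ P₂)) := by
  intro n
  induction n with
  | zero =>
    intro C₁ C₂ hC₁ hC₂ v w P₁ P₂ hP₁ hP₁sub hP₂ hP₂sub hcard
    obtain ⟨p₁, hp₁, hp₁E⟩ := hP₁
    have hvw : v = w := by
      have hP₁empty : P₁ = ∅ := Finset.card_eq_zero.mp (Nat.le_zero.mp hcard)
      rw [hP₁empty] at hp₁E
      have hnil : p₁.edges = [] := by
        rw [← List.toFinset_eq_empty_iff]
        exact_mod_cast hp₁E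
      cases p₁ with
      | nil => rfl
      | cons _ _ => simp at hnil
    exact Or.inr (good_right_of_eq hC₂ hvw hP₂)
  | succ n ih =>
    intro C₁ C₂ hC₁ hC₂ v w P₁ P₂ hP₁ hP₁sub hP₂ hP₂sub hcard
    by_cases hvw : v = w
    · exact Or.inr (good_right_of_eq hC₂ hvw hP₂)
    obtain ⟨p₁, hp₁, rfl⟩ := hP₁
    haveI : DecidablePred (· ∈ edgeVerts C₂) :=
      fun x => decidable_of_iff (∃ e ∈ C₂, x ∈ e) Iff.rfl
    have hwC₂ : w ∈ edgeVerts C₂ :=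
      edgeVerts_mono hP₂sub (end_mem_edgeVerts hP₂ hvw)
    obtain ⟨x, A, B, hxv, hPx, hApath, hBpath, hedges, hAint, hAsupp⟩ :=
      first_hit p₁ hp₁ (· ∈ edgeVerts C₂) hwC₂ hvw
    have hvx : v ≠ x := Ne.symm hxv
    have hAfinsub : A.edges.toFinset ⊆ p₁.edges.toFinset := by
      intro f hf
      rw [List.mem_toFinset] at hf ⊢
      rw [← hedges]; exact List.mem_append_left _ hf
    have hBfinsub : B.edges.toFinset ⊆ p₁.edges.toFinset := by
      intro f hf
      rw [List.mem_toFinset] at hf ⊢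
      rw [← hedges]; exact List.mem_append_right _ hf
    have hp₁nd : (A.edges ++ B.edges).Nodup := by
      rw [hedges]; exact hp₁.isTrail.edges_nodup   -- name check
    have hdisjAB : Disjoint A.edges.toFinset B.edges.toFinset := by
      rw [Finset.disjoint_left]
      intro f hf hf'
      rw [List.mem_toFinset] at hf hf'
      exact List.disjoint_of_nodup_append hp₁nd hf hf'
    have hP₁split : A.edges.toFinset ∪ B.edges.toFinset = p₁.edges.toFinset := by
      rw [← hedges]; simp
    have hAcard : 1 ≤ A.edges.toFinset.card := by
      cases A with
      | nil => exact absurd rfl hxv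
      | @cons _ y _ h' q =>
        have hm : s(v, y) ∈ (Walk.cons h' q).edges.toFinset :=
          List.mem_toFinset.mpr (by simp)
        exact Finset.card_pos.mpr ⟨_, hm⟩
    have hcardB : B.edges.toFinset.card ≤ n := by
      have hcu := Finset.card_union_of_disjoint hdisjAB
      rw [hP₁split] at hcu
      omega
    -- apply uncrossability to the initial piece A
    obtain ⟨S, hS, hSC₂, hSA, -⟩ :=
      h C₂ hC₂ C₁ hC₁ v x hvx A.edges.toFinset ⟨A, hApath, rfl⟩
        (hAfinsub.trans hP₁sub)
        (by
          rintro y ⟨⟨e, he, hye⟩, hy2⟩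
          have hyA : y ∈ A.support :=
            mem_support_of_mem_edges'' A (List.mem_toFinset.mp he) hye
          by_cases h1 : y = v
          · exact Or.inl h1
          by_cases h2 : y = x
          · exact Or.inr h2
          exact absurd hy2 (hAint y hyA h1 h2))
        (edgeVerts_mono hP₂sub (start_mem_edgeVerts hP₂ hvw))
        hPx
    by_cases hxw : x = w
    · -- A is all of P₁; conclude directly
      subst hxw
      have hBnil : B = Walk.nil := path_same_ends_nil B hBpath
      have hAeq : A.edges.toFinset = p₁.edges.toFinset := by
        rw [← hedges, hBnil]; simp
      rcases cycle_path_cases (hcyc C₂ hC₂) hvw hP₂ hP₂sub hS hSC₂ with hSeq | hSeq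
      · left
        exact ⟨S ∪ A.edges.toFinset, hSA, by rw [hSeq, hAeq, Finset.union_comm]⟩
      · right
        exact ⟨S ∪ A.edges.toFinset, hSA, by rw [hSeq, hAeq, Finset.union_comm]⟩
    · -- the interesting case: x is an interior intersection vertex
      have claim : ∀ R : Finset (Sym2 V), IsPathEdges G v w R → R ⊆ C₂ → x ∈ edgeVerts R →
          Good 𝒞 (p₁.edges.toFinset ∪ R) ∨ Good 𝒞 (p₁.edges.toFinset ∪ (C₂ \ R)) := by
        rintro R ⟨r, hr, rfl⟩ hRC hxR
        obtain ⟨e, he, hxe⟩ := hxR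
        have hxr : x ∈ r.support := mem_support_of_mem_edges'' r (List.mem_toFinset.mp he) hxe
        have hrsplit : (r.takeUntil x hxr).edges ++ (r.dropUntil x hxr).edges = r.edges := by
          have hts := congrArg Walk.edges (r.take_spec hxr)
          rwa [Walk.edges_append] at hts
        have hRaC : (r.takeUntil x hxr).edges.toFinset ⊆ C₂ := by
          intro f hf
          refine hRC ?_
          rw [List.mem_toFinset] at hf ⊢
          rw [← hrsplit]; exact List.mem_append_left _ hf
        have hrnd : ((r.takeUntil x hxr).edges ++ (r.dropUntil x hxr).edges).Nodup := by
          rw [hrsplit]; exact hr.isTrail.edges_nodup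
        rcases cycle_path_cases (hcyc C₂ hC₂) hvx ⟨r.takeUntil x hxr, hr.takeUntil hxr, rfl⟩
          hRaC hS hSC₂ with hSeq | hSeq
        · -- S is the initial part of R : done, left
          left
          refine ⟨S ∪ A.edges.toFinset, hSA, ?_⟩
          rw [hSeq]
          intro f hf
          rcases Finset.mem_union.mp hf with hf | hf
          · refine Finset.mem_union_right _ ?_
            rw [List.mem_toFinset] at hf ⊢
            rw [← hrsplit]; exact List.mem_append_left _ hf
          · exact Finset.mem_union_left _ (hAfinsub hf)
        · -- S is the complement of the initial part; use the induction hypothesis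
          have hRbD : (r.dropUntil x hxr).edges.toFinset ⊆ S ∪ A.edges.toFinset := by
            intro f hf
            refine Finset.mem_union_left _ ?_
            rw [hSeq, Finset.mem_sdiff]
            rw [List.mem_toFinset] at hf
            constructor
            · refine hRC ?_
              rw [List.mem_toFinset, ← hrsplit]
              exact List.mem_append_right _ hf
            · intro hfRa
              rw [List.mem_toFinset] at hfRa
              exact List.disjoint_of_nodup_append hrnd hfRa hf
          rcases ih C₁ (S ∪ A.edges.toFinset) hC₁ hSA x w B.edges.toFinset
            (r.dropUntil x hxr).edges.toFinset ⟨B, hBpath, rfl⟩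
            (hBfinsub.trans hP₁sub) ⟨r.dropUntil x hxr, hr.dropUntil hxr, rfl⟩
            hRbD hcardB with hg | hg
          · left
            refine good_mono hg ?_
            intro f hf
            rcases Finset.mem_union.mp hf with hf | hf
            · exact Finset.mem_union_left _ (hBfinsub hf)
            · refine Finset.mem_union_right _ ?_
              rw [List.mem_toFinset] at hf ⊢
              rw [← hrsplit]; exact List.mem_append_right _ hf
          · right
            refine good_mono hg ?_
            intro f hf
            rcases Finset.mem_union.mp hf with hf | hf
            · exact Finset.mem_union_left _ (hBfinsub hf)
            · rw [Finset.mem_sdiff] at hf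
              obtain ⟨hf1, hf2⟩ := hf
              rcases Finset.mem_union.mp hf1 with hf1 | hf1
              · rw [hSeq, Finset.mem_sdiff] at hf1
                obtain ⟨hf3, hf4⟩ := hf1
                refine Finset.mem_union_right _ ?_
                rw [Finset.mem_sdiff]
                refine ⟨hf3, ?_⟩
                intro hfR
                rw [List.mem_toFinset, ← hrsplit] at hfR
                rcases List.mem_append.mp hfR with h5 | h5
                · exact hf4 (List.mem_toFinset.mpr h5)
                · exact hf2 (List.mem_toFinset.mpr h5)
              · exact Finset.mem_union_left _ (hAfinsub hf1)
      -- apply the claim to `P₂` or to its complement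
      have hC₂eq : P₂ ∪ (C₂ \ P₂) = C₂ := Finset.union_sdiff_of_subset hP₂sub
      have hxsplit : x ∈ edgeVerts P₂ ∨ x ∈ edgeVerts (C₂ \ P₂) := by
        refine mem_edgeVerts_union.mp ?_
        rw [hC₂eq]
        exact hPx
      rcases hxsplit with hx1 | hx1
      · exact claim P₂ hP₂ hP₂sub hx1
      · rcases claim (C₂ \ P₂) (cycle_compl_path (hcyc C₂ hC₂) hvw hP₂ hP₂sub)
          (Finset.sdiff_subset) hx1 with hg | hg
        · exact Or.inr hg
        · left
          rwa [Finset.sdiff_sdiff_eq_self hP₂sub] at hg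


end Helpers

/-- Let `𝒞` be an uncrossable family of cycles, `C₁, C₂ ∈ 𝒞`, `P₁` a `v`-`w`-path
contained in `C₁` and `P₂` a `v`-`w`-path contained in `C₂`. Then `P₁ + P₂` or
`P₁ + (C₂ - P₂)` is good. -/
theorem good_of_uncrossable (G : SimpleGraph V)
    (𝒞 : Set (Finset (Sym2 V))) (hcyc : ∀ s ∈ 𝒞, IsCycleEdges G s)
    (h : Uncrossable G 𝒞)
    (C₁ C₂ : Finset (Sym2 V)) (hC₁ : C₁ ∈ 𝒞) (hC₂ : C₂ ∈ 𝒞)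
    (v w : V) (P₁ P₂ : Finset (Sym2 V))
    (hP₁ : IsPathEdges G v w P₁) (hP₁sub : P₁ ⊆ C₁)
    (hP₂ : IsPathEdges G v w P₂) (hP₂sub : P₂ ⊆ C₂) :
    Good 𝒞 (P₁ ∪ P₂) ∨ Good 𝒞 (P₁ ∪ (C₂ \ P₂)) := by
  exact aux_good G 𝒞 hcyc h P₁.card C₁ C₂ hC₁ hC₂ v w P₁ P₂ hP₁ hP₁sub hP₂ hP₂sub le_rfl
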